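/- Let σ be a permutation of a set Ω of 2E elements with V cycles, and let τ be a fixed-point-free involution on Ω such that the subgroup ⟨σ, τ⟩ acts transitively on Ω. If F is the number of cycles of σ∘τ, then V − E + F ≤ 2. -/

import Mathlib

set_option linter.unusedSectionVars false

open Equiv Finset

/-- Number of cycles of a permutation, counting fixed points as 1-cycles. -/
def cycleCount {α : Type*} [Fintype α] [DecidableEq α] (σ : Equiv.Perm α) : ℕ :=
  σ.cycleType.card + (Fintype.card α - σ.support.card)

/-- A fixed-point-free involution (a product of disjoint 2-cycles covering all points). -/
def IsFpfInvolution {α : Type*} (τ : Equiv.Perm α) : Prop :=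
  τ * τ = 1 ∧ ∀ x, τ x ≠ x

/-- The subgroup generated by σ and τ acts transitively. -/
def IsTransitivePair {α : Type*} (σ τ : Equiv.Perm α) : Prop :=
  ∀ x y : α, ∃ g ∈ Subgroup.closure ({σ, τ} : Set (Equiv.Perm α)), g x = y

namespace EulerProofAux

open Equiv.Perm Subgroup Function

variable {α : Type*} [Fintype α] [DecidableEq α]

/-- Orbit setoid of a subgroup of permutations. -/
def orbS (G : Subgroup (Perm α)) : Setoid α where
  r x y := ∃ g ∈ G, g x = y
  iseqv := by
    refine ⟨fun x => ⟨1, G.one_mem, rfl⟩, ?_, ?_⟩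
    · rintro x y ⟨g, hg, rfl⟩
      exact ⟨g⁻¹, G.inv_mem hg, g.symm_apply_apply x⟩
    · rintro x y z ⟨g, hg, rfl⟩ ⟨h, hh, rfl⟩
      exact ⟨h * g, G.mul_mem hh hg, rfl⟩

lemma orbS_r {G : Subgroup (Perm α)} {x y : α} :
    (orbS G).r x y ↔ ∃ g ∈ G, g x = y := Iff.rfl

noncomputable def nOrb (G : Subgroup (Perm α)) : ℕ := Nat.card (Quotient (orbS G))

noncomputable def o1 (f : Perm α) : ℕ := nOrb (closure {f})

noncomputable def o2 (f g : Perm α) : ℕ := nOrb (closure {f, g})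

lemma o1_def (f : Perm α) :
    o1 f = Nat.card (Quotient (orbS (closure {f}))) := rfl

lemma o2_def (f g : Perm α) :
    o2 f g = Nat.card (Quotient (orbS (closure {f, g}))) := rfl

/-- quotient map along an implication of setoids -/
def qmap {s t : Setoid α} (h : ∀ x y, s.r x y → t.r x y) : Quotient s → Quotient t :=
  Quotient.lift (fun x => Quotient.mk t x) fun x y hxy => Quotient.sound (h x y hxy)

lemma qmap_mk {s t : Setoid α} (h : ∀ x y, s.r x y → t.r x y) (x : α) :
    qmap h (Quotient.mk s x) = Quotient.mk t x := rfl

lemma qmap_surj {s t : Setoid α} (h : ∀ x y, s.r x y → t.r x y) :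
    Function.Surjective (qmap h) := by
  intro q
  obtain ⟨x, rfl⟩ := Quotient.exists_rep q
  exact ⟨Quotient.mk s x, rfl⟩

lemma card_quot_le {s t : Setoid α} (h : ∀ x y, s.r x y → t.r x y) :
    Nat.card (Quotient t) ≤ Nat.card (Quotient s) :=
  Nat.card_le_card_of_surjective (qmap h) (qmap_surj h)

/-- the setoid `s` with the classes of `a` and `b` merged -/
def addPair (s : Setoid α) (a b : α) : Setoid α where
  r x y := s.r x y ∨ (s.r x a ∧ s.r b y) ∨ (s.r x b ∧ s.r a y)
  iseqv := by
    constructor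
    · exact fun x => Or.inl (s.iseqv.refl x)
    · rintro x y (h | ⟨h1, h2⟩ | ⟨h1, h2⟩)
      · exact Or.inl (s.iseqv.symm h)
      · exact Or.inr (Or.inr ⟨s.iseqv.symm h2, s.iseqv.symm h1⟩)
      · exact Or.inr (Or.inl ⟨s.iseqv.symm h2, s.iseqv.symm h1⟩)
    · rintro x y z (h | ⟨h1, h2⟩ | ⟨h1, h2⟩) (h' | ⟨h1', h2'⟩ | ⟨h1', h2'⟩)
      · exact Or.inl (s.iseqv.trans h h')
      · exact Or.inr (Or.inl ⟨s.iseqv.trans h h1', h2'⟩)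
      · exact Or.inr (Or.inr ⟨s.iseqv.trans h h1', h2'⟩)
      · exact Or.inr (Or.inl ⟨h1, s.iseqv.trans h2 h'⟩)
      · exact Or.inl (s.iseqv.trans h1 (s.iseqv.trans (s.iseqv.symm (s.iseqv.trans h2 h1')) h2'))
      · exact Or.inl (s.iseqv.trans h1 h2')
      · exact Or.inr (Or.inr ⟨h1, s.iseqv.trans h2 h'⟩)
      · exact Or.inl (s.iseqv.trans h1 h2')
      · exact Or.inl (s.iseqv.trans h1 (s.iseqv.trans (s.iseqv.symm (s.iseqv.trans h2 h1')) h2'))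

lemma addPair_r {s : Setoid α} {a b x y : α} :
    (addPair s a b).r x y ↔
      s.r x y ∨ (s.r x a ∧ s.r b y) ∨ (s.r x b ∧ s.r a y) := Iff.rfl

lemma le_addPair (s : Setoid α) (a b : α) :
    ∀ x y, s.r x y → (addPair s a b).r x y := fun _ _ h => Or.inl h

lemma addPair_le {s : Setoid α} {a b : α} (hab : s.r a b) :
    ∀ x y, (addPair s a b).r x y → s.r x y := by
  rintro x y (h | ⟨h1, h2⟩ | ⟨h1, h2⟩)
  · exact h
  · exact s.iseqv.trans h1 (s.iseqv.trans hab h2)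
  · exact s.iseqv.trans h1 (s.iseqv.trans (s.iseqv.symm hab) h2)

lemma card_quot_le_addPair (s : Setoid α) (a b : α) :
    Nat.card (Quotient s) ≤ Nat.card (Quotient (addPair s a b)) + 1 := by
  classical
  let t := addPair s a b
  let φ : Quotient s → Option (Quotient t) := fun q =>
    if q = Quotient.mk s a then none else some (qmap (le_addPair s a b) q)
  have hinj : Function.Injective φ := by
    intro q1 q2 h
    by_cases h1 : q1 = Quotient.mk s a <;> by_cases h2 : q2 = Quotient.mk s a
    · rw [h1, h2]
    · simp only [φ, if_pos h1, if_neg h2] at h; exact absurd h (by simp)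
    · simp only [φ, if_neg h1, if_pos h2] at h; exact absurd h (by simp)
    · simp only [φ, if_neg h1, if_neg h2, Option.some_inj] at h
      obtain ⟨x, rfl⟩ := Quotient.exists_rep q1
      obtain ⟨y, rfl⟩ := Quotient.exists_rep q2
      rw [qmap_mk, qmap_mk] at h
      have h3 : (addPair s a b).r x y := Quotient.exact h
      rcases (addPair_r.mp h3) with h' | ⟨ha, hb⟩ | ⟨ha, hb⟩
      · exact Quotient.sound h'
      · exact absurd (Quotient.sound ha) h1
      · exact absurd (Quotient.sound (s.iseqv.symm hb)) h2
  calc Nat.card (Quotient s) ≤ Nat.card (Option (Quotient t)) :=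
        Nat.card_le_card_of_injective φ hinj
    _ = Nat.card (Quotient t) + 1 := Finite.card_option

lemma card_succ_le_of_surj {β γ : Type*} [Finite β] {ψ : β → γ} (hs : Function.Surjective ψ)
    {x y : β} (hxy : x ≠ y) (hψ : ψ x = ψ y) : Nat.card γ + 1 ≤ Nat.card β := by
  classical
  have : Finite γ := Finite.of_surjective ψ hs
  let χ : γ → β := fun q => if surjInv hs q = y then x else surjInv hs q
  have hχψ : ∀ q, ψ (χ q) = q := by
    intro q; by_cases h : surjInv hs q = y
    · simp only [χ, if_pos h]; rw [hψ, ← h]; exact surjInv_eq hs q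
    · simp only [χ, if_neg h]; exact surjInv_eq hs q
  have hχy : ∀ q, χ q ≠ y := by
    intro q; by_cases h : surjInv hs q = y <;> simp [χ, h, hxy]
  let χ' : Option γ → β := fun o => o.elim y χ
  have hinj : Function.Injective χ' := by
    rintro (_ | q1) (_ | q2) h
    · rfl
    · exact absurd h.symm (hχy q2)
    · exact absurd h (hχy q1)
    · have h2 := congrArg ψ h
      simp only [χ', Option.elim, hχψ] at h2
      exact congrArg some h2
  calc Nat.card γ + 1 = Nat.card (Option γ) := Finite.card_option.symm
    _ ≤ Nat.card β := Nat.card_le_card_of_injective χ' hinj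

lemma closure_resp {S : Set (Perm α)} {s : Setoid α}
    (h : ∀ g ∈ S, ∀ x, s.r (g x) x) :
    ∀ g ∈ closure S, ∀ x, s.r (g x) x := by
  intro g hg
  induction hg using closure_induction with
  | mem g hgS => exact h g hgS
  | one => exact fun x => s.iseqv.refl x
  | mul g k hg hk ihg ihk => exact fun x => s.iseqv.trans (ihg (k x)) (ihk x)
  | inv g hg ih =>
      intro x
      have h2 := ih (g⁻¹ x)
      rw [show g (g⁻¹ x) = x from g.apply_symm_apply x] at h2
      exact s.iseqv.symm h2

lemma orbS_le {S : Set (Perm α)} {s : Setoid α}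
    (h : ∀ g ∈ S, ∀ x, s.r (g x) x) :
    ∀ x y, (orbS (closure S)).r x y → s.r x y := by
  rintro x y ⟨g, hg, rfl⟩
  exact s.iseqv.symm (closure_resp h g hg x)

lemma orbS_single {f : Perm α} {x y : α} :
    (orbS (closure {f})).r x y ↔ f.SameCycle x y := by
  constructor
  · rintro ⟨g, hg, rfl⟩
    obtain ⟨n, rfl⟩ := mem_closure_singleton.mp hg
    exact ⟨n, rfl⟩
  · rintro ⟨n, hn⟩
    exact ⟨f ^ n, zpow_mem (mem_closure_singleton_self f) n, hn⟩

lemma orbS_apply {S : Set (Perm α)} {u : Perm α} (hu : u ∈ S) (x : α) :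
    (orbS (closure S)).r (u x) x :=
  (orbS (closure S)).iseqv.symm ⟨u, subset_closure hu, rfl⟩

lemma o1_succ_le {u v : Perm α} {a b : α}
    (hA : ∀ x, v.SameCycle (u x) x)
    (hu : ¬ u.SameCycle a b) (hv : v.SameCycle a b) :
    o1 v + 1 ≤ o1 u := by
  have himp : ∀ x y, (orbS (closure {u})).r x y → (orbS (closure {v})).r x y := by
    apply orbS_le
    intro g hg x
    rw [Set.mem_singleton_iff] at hg; subst hg
    exact orbS_single.mpr (hA x)
  rw [o1_def, o1_def]
  refine card_succ_le_of_surj (qmap_surj himp)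
    (x := Quotient.mk _ b) (y := Quotient.mk _ a) ?_ ?_
  · intro h
    exact hu ((orbS_single.mp (Quotient.exact h)).symm)
  · show Quotient.mk _ b = Quotient.mk _ a
    exact Quotient.sound (orbS_single.mpr hv.symm)

lemma hA_g {g : Perm α} {a : α} (x : α) :
    g.SameCycle ((Equiv.swap a (g a) * g) x) x := by
  rcases eq_or_ne (g x) a with h | h
  · have h1 : (Equiv.swap a (g a) * g) x = g a := by
      rw [Perm.mul_apply, h, Equiv.swap_apply_left]
    rw [h1, ← h]
    exact sameCycle_apply_left.mpr (sameCycle_apply_left.mpr (SameCycle.refl _ _))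
  · rcases eq_or_ne (g x) (g a) with h2 | h2
    · have hx : x = a := g.injective h2
      subst hx
      have h1 : (Equiv.swap x (g x) * g) x = x := by
        rw [Perm.mul_apply, Equiv.swap_apply_right]
      rw [h1]
    · have h1 : (Equiv.swap a (g a) * g) x = g x := by
        rw [Perm.mul_apply, Equiv.swap_apply_of_ne_of_ne h h2]
      rw [h1]
      exact sameCycle_apply_left.mpr (SameCycle.refl _ _)

lemma step_g {g : Perm α} {a : α} (ha : g a ≠ a) :
    o1 g + 1 ≤ o1 (Equiv.swap a (g a) * g) := by
  refine o1_succ_le (a := a) (b := g a) hA_g ?_ ?_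
  · rintro ⟨n, hn⟩
    have hfix : (Equiv.swap a (g a) * g) a = a := by
      rw [Perm.mul_apply, Equiv.swap_apply_right]
    rw [zpow_apply_eq_self_of_apply_eq_self hfix] at hn
    exact ha hn.symm
  · exact (sameCycle_apply_left.mpr (SameCycle.refl g a)).symm

lemma step_f {f : Perm α} {a b : α}
    (hsc : f.SameCycle a b) (hnsc : ¬ (f * Equiv.swap a b).SameCycle a b) :
    o1 f + 1 ≤ o1 (f * Equiv.swap a b) := by
  refine o1_succ_le ?_ hnsc hsc
  intro x
  rcases eq_or_ne x a with rfl | hxa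
  · have h1 : (f * Equiv.swap x b) x = f b := by
      rw [Perm.mul_apply, Equiv.swap_apply_left]
    rw [h1]
    exact (sameCycle_apply_left.mpr (SameCycle.refl f b)).trans hsc.symm
  · rcases eq_or_ne x b with rfl | hxb
    · have h1 : (f * Equiv.swap a x) x = f a := by
        rw [Perm.mul_apply, Equiv.swap_apply_right]
      rw [h1]
      exact (sameCycle_apply_left.mpr (SameCycle.refl f a)).trans hsc
    · have h1 : (f * Equiv.swap a b) x = f x := by
        rw [Perm.mul_apply, Equiv.swap_apply_of_ne_of_ne hxa hxb]
      rw [h1]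
      exact sameCycle_apply_left.mpr (SameCycle.refl f x)

lemma o1_mul_swap_le (f : Perm α) (a b : α) :
    o1 f ≤ o1 (f * Equiv.swap a b) + 1 := by
  have himp : ∀ x y, (orbS (closure {f * Equiv.swap a b})).r x y →
      (addPair (orbS (closure {f})) a b).r x y := by
    apply orbS_le
    intro g hg x
    rw [Set.mem_singleton_iff] at hg; subst hg
    rcases eq_or_ne x a with rfl | hxa
    · refine Or.inr (Or.inr ⟨?_, (orbS (closure {f})).iseqv.refl x⟩)
      have h1 : (f * Equiv.swap x b) x = f b := by
        rw [Perm.mul_apply, Equiv.swap_apply_left]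
      rw [h1]
      exact orbS_single.mpr (sameCycle_apply_left.mpr (SameCycle.refl f b))
    · rcases eq_or_ne x b with rfl | hxb
      · refine Or.inr (Or.inl ⟨?_, (orbS (closure {f})).iseqv.refl x⟩)
        have h1 : (f * Equiv.swap a x) x = f a := by
          rw [Perm.mul_apply, Equiv.swap_apply_right]
        rw [h1]
        exact orbS_single.mpr (sameCycle_apply_left.mpr (SameCycle.refl f a))
      · refine Or.inl ?_
        have h1 : (f * Equiv.swap a b) x = f x := by
          rw [Perm.mul_apply, Equiv.swap_apply_of_ne_of_ne hxa hxb]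
        rw [h1]
        exact orbS_single.mpr (sameCycle_apply_left.mpr (SameCycle.refl f x))
  rw [o1_def, o1_def]
  calc Nat.card (Quotient (orbS (closure {f})))
      ≤ Nat.card (Quotient (addPair (orbS (closure {f})) a b)) + 1 :=
        card_quot_le_addPair _ a b
    _ ≤ Nat.card (Quotient (orbS (closure {f * Equiv.swap a b}))) + 1 :=
        Nat.add_le_add_right (card_quot_le himp) 1

lemma o2_addPair_le (f g : Perm α) (a b : α) :
    Nat.card (Quotient (addPair
      (orbS (closure {f * Equiv.swap a b, Equiv.swap a b * g})) a b)) ≤ o2 f g := by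
  rw [o2_def]
  apply card_quot_le
  apply orbS_le
  intro u hu x
  have hmemf : f * Equiv.swap a b ∈ ({f * Equiv.swap a b, Equiv.swap a b * g} : Set (Perm α)) :=
    Set.mem_insert _ _
  have hmemg : Equiv.swap a b * g ∈ ({f * Equiv.swap a b, Equiv.swap a b * g} : Set (Perm α)) :=
    Set.mem_insert_of_mem _ rfl
  rw [Set.mem_insert_iff, Set.mem_singleton_iff] at hu
  set s0 := orbS (closure ({f * Equiv.swap a b, Equiv.swap a b * g} : Set (Perm α))) with hs0
  rcases hu with rfl | rfl
  · -- generator f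
    rcases eq_or_ne x a with rfl | hxa
    · refine Or.inr (Or.inr ⟨?_, s0.iseqv.refl x⟩)
      have h1 : u x = (u * Equiv.swap x b) b := by
        rw [Perm.mul_apply, Equiv.swap_apply_right]
      rw [h1]
      exact orbS_apply hmemf b
    · rcases eq_or_ne x b with rfl | hxb
      · refine Or.inr (Or.inl ⟨?_, s0.iseqv.refl x⟩)
        have h1 : u x = (u * Equiv.swap a x) a := by
          rw [Perm.mul_apply, Equiv.swap_apply_left]
        rw [h1]
        exact orbS_apply hmemf a
      · refine Or.inl ?_
        have h1 : u x = (u * Equiv.swap a b) x := by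
          rw [Perm.mul_apply, Equiv.swap_apply_of_ne_of_ne hxa hxb]
        rw [h1]
        exact orbS_apply hmemf x
  · -- generator g
    have hg : u x = Equiv.swap a b ((Equiv.swap a b * u) x) := by
      rw [Perm.mul_apply, Equiv.swap_apply_self]
    rcases eq_or_ne ((Equiv.swap a b * u) x) a with hy | hy
    · have h1 : u x = b := by rw [hg, hy, Equiv.swap_apply_left]
      refine Or.inr (Or.inr ⟨by rw [h1], ?_⟩)
      have h2 := orbS_apply hmemg x
      rwa [hy] at h2
    · rcases eq_or_ne ((Equiv.swap a b * u) x) b with hy2 | hy2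
      · have h1 : u x = a := by rw [hg, hy2, Equiv.swap_apply_right]
        refine Or.inr (Or.inl ⟨by rw [h1], ?_⟩)
        have h2 := orbS_apply hmemg x
        rwa [hy2] at h2
      · have h1 : u x = (Equiv.swap a b * u) x := by
          rw [hg, Equiv.swap_apply_of_ne_of_ne hy hy2]
        refine Or.inl ?_
        rw [h1]
        exact orbS_apply hmemg x

lemma o2_le_of_rel (f g : Perm α) {a b : α}
    (hC : (orbS (closure {f * Equiv.swap a b, Equiv.swap a b * g})).r a b) :
    o2 (f * Equiv.swap a b) (Equiv.swap a b * g) ≤ o2 f g := by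
  rw [o2_def]
  exact le_trans (card_quot_le (addPair_le hC)) (o2_addPair_le f g a b)

lemma o2_le_succ (f g : Perm α) (a b : α) :
    o2 (f * Equiv.swap a b) (Equiv.swap a b * g) ≤ o2 f g + 1 := by
  rw [o2_def]
  exact le_trans (card_quot_le_addPair _ a b)
    (Nat.add_le_add_right (o2_addPair_le f g a b) 1)

lemma sameCycle_swap {u : Perm α} {a b : α} (hab : a ≠ b) (h : ¬ u.SameCycle a b) :
    (u * Equiv.swap a b).SameCycle a b := by
  set f := u * Equiv.swap a b with hf
  have hper : b ∈ Function.periodicPts ⇑u := by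
    refine ⟨orderOf u, orderOf_pos u, ?_⟩
    show (⇑u)^[orderOf u] b = b
    rw [Equiv.Perm.iterate_eq_pow, pow_orderOf_eq_one]
    rfl
  set k := Function.minimalPeriod ⇑u b with hk
  have hk1 : 1 ≤ k := Function.minimalPeriod_pos_of_mem_periodicPts hper
  have key : ∀ j, 1 ≤ j → j ≤ k → (f ^ j) a = (u ^ j) b := by
    intro j
    induction j with
    | zero => omega
    | succ j ih =>
      intro _ hjk
      by_cases hj : j = 0
      · subst hj
        show (f ^ 1) a = (u ^ 1) b
        rw [pow_one, pow_one, hf, Perm.mul_apply, Equiv.swap_apply_left]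
      · have hj1 : 1 ≤ j := Nat.one_le_iff_ne_zero.mpr hj
        have hjlt : j < k := lt_of_lt_of_le (Nat.lt_succ_self j) hjk
        have ih' := ih hj1 (le_of_lt hjlt)
        have hyb : (u ^ j) b ≠ b := by
          intro hcon
          exact Function.not_isPeriodicPt_of_pos_of_lt_minimalPeriod hj hjlt
            (by rw [Function.IsPeriodicPt, Function.IsFixedPt, Equiv.Perm.iterate_eq_pow]; exact hcon)
        have hya : (u ^ j) b ≠ a := by
          intro hcon
          refine h ⟨-(j : ℤ), ?_⟩
          rw [zpow_neg, zpow_natCast, ← hcon, show ((u ^ j)⁻¹ ((u ^ j) b)) = b from (u ^ j).symm_apply_apply b]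
        calc (f ^ (j + 1)) a = f ((f ^ j) a) := by rw [pow_succ', Perm.mul_apply]
          _ = f ((u ^ j) b) := by rw [ih']
          _ = (u ^ (j + 1)) b := by
              rw [hf, Perm.mul_apply, Equiv.swap_apply_of_ne_of_ne hya hyb,
                pow_succ', Perm.mul_apply]
  have hkb : (u ^ k) b = b := by
    have h2 := Function.isPeriodicPt_minimalPeriod ⇑u b
    rwa [Function.IsPeriodicPt, Function.IsFixedPt, Equiv.Perm.iterate_eq_pow] at h2
  exact ⟨(k : ℤ), by rw [zpow_natCast, key k hk1 le_rfl, hkb]⟩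

lemma o1_one : o1 (1 : Perm α) = Fintype.card α := by
  rw [o1_def, ← Nat.card_eq_fintype_card]
  symm
  apply Nat.card_eq_of_bijective (fun x => Quotient.mk (orbS (closure {(1 : Perm α)})) x)
  constructor
  · intro x y h
    obtain ⟨g, hg, hgx⟩ := Quotient.exact h
    obtain ⟨n, rfl⟩ := mem_closure_singleton.mp hg
    rw [one_zpow] at hgx
    exact hgx
  · intro q
    obtain ⟨x, rfl⟩ := Quotient.exists_rep q
    exact ⟨x, rfl⟩

lemma o2_one (f : Perm α) : o2 f 1 = o1 f := by
  rw [o1_def, o2_def]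
  have hcl : closure ({f, 1} : Set (Perm α)) = closure {f} := by
    apply le_antisymm
    · rw [closure_le]
      intro x hx
      rw [Set.mem_insert_iff, Set.mem_singleton_iff] at hx
      rcases hx with rfl | rfl
      · exact subset_closure rfl
      · exact (closure ({f} : Set (Perm α))).one_mem
    · apply Subgroup.closure_mono
      intro x hx
      rw [Set.mem_singleton_iff] at hx
      subst hx
      exact Set.mem_insert _ _
  rw [hcl]

lemma o2_le_one {f g : Perm α}
    (h : ∀ x y : α, ∃ u ∈ closure ({f, g} : Set (Perm α)), u x = y) :
    o2 f g ≤ 1 := by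
  rw [o2_def]
  have hsub : Subsingleton (Quotient (orbS (closure ({f, g} : Set (Perm α))))) := by
    constructor
    intro q1 q2
    obtain ⟨x, rfl⟩ := Quotient.exists_rep q1
    obtain ⟨y, rfl⟩ := Quotient.exists_rep q2
    exact Quotient.sound (h x y)
  exact Finite.card_le_one_iff_subsingleton.mpr hsub

lemma cycleCount_le_o1 (f : Perm α) : cycleCount f ≤ o1 f := by
  classical
  have h1 : cycleCount f = f.cycleFactorsFinset.card + (Fintype.card α - f.support.card) := by
    unfold cycleCount
    rw [cycleType_def, Multiset.card_map]
    rfl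
  set s := orbS (closure ({f} : Set (Perm α))) with hs
  have hpt : ∀ c : {c // c ∈ f.cycleFactorsFinset}, ∃ x, x ∈ (c.1).support :=
    fun c => (mem_cycleFactorsFinset_iff.mp c.2).1.nonempty_support
  choose pt hpt' using hpt
  let J : ({c // c ∈ f.cycleFactorsFinset} ⊕ {x : α // f x = x}) → Quotient s :=
    Sum.elim (fun c => Quotient.mk s (pt c)) (fun x => Quotient.mk s x.1)
  have hsupp : ∀ c : {c // c ∈ f.cycleFactorsFinset}, f (pt c) ≠ pt c := by
    intro c
    have hc := mem_cycleFactorsFinset_iff.mp c.2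
    have h2 := hc.2 (pt c) (hpt' c)
    have hne := Equiv.Perm.mem_support.mp (hpt' c)
    rw [h2] at hne
    exact hne
  have hJ : Function.Injective J := by
    rintro (c1 | x1) (c2 | x2) h
    · have hr : f.SameCycle (pt c1) (pt c2) := orbS_single.mp (Quotient.exact h)
      have e1 : c1.1 = f.cycleOf (pt c1) := cycle_is_cycleOf (hpt' c1) c1.2
      have e2 : c2.1 = f.cycleOf (pt c2) := cycle_is_cycleOf (hpt' c2) c2.2
      have : c1.1 = c2.1 := by rw [e1, e2, hr.cycleOf_eq]
      exact congrArg Sum.inl (Subtype.ext this)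
    · exfalso
      have hr : f.SameCycle (pt c1) x2.1 := orbS_single.mp (Quotient.exact h)
      obtain ⟨n, hn⟩ := hr.symm
      rw [zpow_apply_eq_self_of_apply_eq_self x2.2] at hn
      have := hsupp c1
      rw [← hn] at this
      exact this x2.2
    · exfalso
      have hr : f.SameCycle x1.1 (pt c2) := orbS_single.mp (Quotient.exact h)
      obtain ⟨n, hn⟩ := hr
      rw [zpow_apply_eq_self_of_apply_eq_self x1.2] at hn
      have := hsupp c2
      rw [← hn] at this
      exact this x1.2
    · have hr : f.SameCycle x1.1 x2.1 := orbS_single.mp (Quotient.exact h)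
      obtain ⟨n, hn⟩ := hr
      rw [zpow_apply_eq_self_of_apply_eq_self x1.2] at hn
      exact congrArg Sum.inr (Subtype.ext hn)
  have hcard := Nat.card_le_card_of_injective J hJ
  rw [Nat.card_sum, Nat.card_eq_fintype_card, Nat.card_eq_fintype_card, Fintype.card_coe] at hcard
  have hfix : Fintype.card {x : α // f x = x} = Fintype.card α - f.support.card := by
    rw [Fintype.card_subtype]
    have hsupport : f.support = univ.filter (fun x => ¬ f x = x) := by
      ext x
      simp [Equiv.Perm.mem_support]
    have hpart := Finset.card_filter_add_card_filter_not
      (s := (univ : Finset α)) (p := fun x => f x = x)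
    rw [← hsupport] at hpart
    have : Fintype.card α = Finset.univ.card := Finset.card_univ.symm
    omega
  rw [hfix] at hcard
  rw [h1, o1_def]
  exact hcard

lemma card_le_two_mul_o1 {τ : Perm α} (h2 : τ * τ = 1) :
    Fintype.card α ≤ 2 * o1 τ := by
  classical
  have hmem : ∀ g ∈ closure ({τ} : Set (Perm α)), g = 1 ∨ g = τ := by
    intro g hg
    obtain ⟨n, rfl⟩ := mem_closure_singleton.mp hg
    have hτ2 : τ ^ (2 : ℤ) = 1 := by
      rw [show (2 : ℤ) = ((2 : ℕ) : ℤ) from rfl, zpow_natCast, pow_two]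
      exact h2
    rcases Int.even_or_odd n with ⟨m, rfl⟩ | ⟨m, rfl⟩
    · left
      rw [show m + m = 2 * m by ring, zpow_mul, hτ2, one_zpow]
    · right
      rw [zpow_add, zpow_mul, hτ2, one_zpow, one_mul, zpow_one]
  set s := orbS (closure ({τ} : Set (Perm α))) with hs
  let ψ : Quotient s × Bool → α := fun p => if p.2 then τ p.1.out else p.1.out
  have hsurj : Function.Surjective ψ := by
    intro x
    have hrel : s.r (Quotient.mk s x).out x := Quotient.exact (Quotient.out_eq _)
    obtain ⟨g, hg, hgx⟩ := hrel
    rcases hmem g hg with rfl | rfl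
    · exact ⟨(Quotient.mk s x, false), by simpa [ψ] using hgx⟩
    · exact ⟨(Quotient.mk s x, true), by simpa [ψ] using hgx⟩
  have hcard := Nat.card_le_card_of_surjective ψ hsurj
  rw [Nat.card_prod, Nat.card_eq_fintype_card (α := α), Nat.card_eq_fintype_card (α := Bool),
    Fintype.card_bool] at hcard
  rw [o1_def, ← hs]
  omega

lemma key_ineq : ∀ (N : ℕ) (f g : Perm α), g.support.card ≤ N →
    o1 f + o1 g + o1 (f * g) ≤ Fintype.card α + 2 * o2 f g := by
  intro N
  induction N with
  | zero =>
    intro f g hg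
    have hg1 : g = 1 := support_eq_empty_iff.mp (Finset.card_eq_zero.mp (Nat.le_zero.mp hg))
    subst hg1
    rw [mul_one, o1_one, o2_one]
    omega
  | succ N ih =>
    intro f g hg
    rcases eq_or_ne g 1 with rfl | hg1
    · rw [mul_one, o1_one, o2_one]
      omega
    · obtain ⟨a, ha⟩ : ∃ a, a ∈ g.support := by
        by_contra hcon
        push_neg at hcon
        exact hg1 (support_eq_empty_iff.mp (Finset.eq_empty_iff_forall_notMem.mpr hcon))
      have haa : g a ≠ a := Equiv.Perm.mem_support.mp ha
      have hab : a ≠ g a := Ne.symm haa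
      have hfg : (f * Equiv.swap a (g a)) * (Equiv.swap a (g a) * g) = f * g := by
        rw [mul_assoc, ← mul_assoc (Equiv.swap a (g a)), Equiv.swap_mul_self, one_mul]
      have hsub : (Equiv.swap a (g a) * g).support ⊆ g.support := by
        intro x hx
        rw [Equiv.Perm.mem_support] at hx ⊢
        intro hgx
        apply hx
        rw [Perm.mul_apply, hgx]
        rcases eq_or_ne x a with rfl | hxa
        · exact absurd hgx haa
        · rcases eq_or_ne x (g a) with rfl | hxb
          · exact absurd (g.injective hgx) hxa
          · exact Equiv.swap_apply_of_ne_of_ne hxa hxb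
      have hanot : a ∉ (Equiv.swap a (g a) * g).support := by
        rw [Equiv.Perm.mem_support]
        push_neg
        rw [Perm.mul_apply, Equiv.swap_apply_right]
      have hlt : (Equiv.swap a (g a) * g).support.card < g.support.card :=
        Finset.card_lt_card ⟨hsub, fun hss => hanot (hss ha)⟩
      have IH := ih (f * Equiv.swap a (g a)) (Equiv.swap a (g a) * g) (by omega)
      rw [hfg] at IH
      have h1 : o1 g + 1 ≤ o1 (Equiv.swap a (g a) * g) := step_g haa
      by_cases hC : (orbS (closure
          {f * Equiv.swap a (g a), Equiv.swap a (g a) * g})).r a (g a)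
      · have h2 : o1 f ≤ o1 (f * Equiv.swap a (g a)) + 1 := o1_mul_swap_le f a (g a)
        have h3 : o2 (f * Equiv.swap a (g a)) (Equiv.swap a (g a) * g) ≤ o2 f g :=
          o2_le_of_rel f g hC
        omega
      · have hnsc : ¬ (f * Equiv.swap a (g a)).SameCycle a (g a) := by
          rintro ⟨n, hn⟩
          exact hC ⟨(f * Equiv.swap a (g a)) ^ n,
            zpow_mem (subset_closure (Set.mem_insert _ _)) n, hn⟩
        have hsc : f.SameCycle a (g a) := by
          have h4 := sameCycle_swap hab hnsc
          rwa [mul_assoc, Equiv.swap_mul_self, mul_one] at h4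
        have h2 : o1 f + 1 ≤ o1 (f * Equiv.swap a (g a)) := step_f hsc hnsc
        have h3 : o2 (f * Equiv.swap a (g a)) (Equiv.swap a (g a) * g) ≤ o2 f g + 1 :=
          o2_le_succ f g a (g a)
        omega

end EulerProofAux

theorem euler_char_le_two (E : ℕ) (σ τ : Equiv.Perm (Fin (2 * E)))
    (hτ : IsFpfInvolution τ) (htrans : IsTransitivePair σ τ) :
    (cycleCount σ : ℤ) - E + cycleCount (σ * τ) ≤ 2 := by
  classical
  obtain ⟨h2, _⟩ := hτ
  have hkey := EulerProofAux.key_ineq τ.support.card σ τ le_rfl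
  have hV : cycleCount σ ≤ EulerProofAux.o1 σ := EulerProofAux.cycleCount_le_o1 σ
  have hF : cycleCount (σ * τ) ≤ EulerProofAux.o1 (σ * τ) :=
    EulerProofAux.cycleCount_le_o1 (σ * τ)
  have hE : Fintype.card (Fin (2 * E)) ≤ 2 * EulerProofAux.o1 τ :=
    EulerProofAux.card_le_two_mul_o1 h2
  have htr : EulerProofAux.o2 σ τ ≤ 1 := EulerProofAux.o2_le_one htrans
  have hcard : Fintype.card (Fin (2 * E)) = 2 * E := Fintype.card_fin _
  rw [hcard] at hkey hE
  omega
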